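/- arXiv:2003.02558 — 14 statements merged into one kernel-verified Lean document; each statement's English description precedes it below -/
import Mathlib

section
/- Let G be a group and S a nonempty subset of G. Then the subgroup generated by S⁻¹S equals the subgroup generated by S if and only if S is not contained in any coset gG' where g ∈ G and G' is a proper subgroup of the subgroup generated by S. -/
open Pointwise

/-- The set of hermitian squares of an involution semigroup. -/
def hermSq (S : Type*) [Mul S] [Star S] : Set S := {a | ∃ x : S, a = x * star x}

/-- `T` is an involution subsemigroup. -/
def IsInvSub {S : Type*} [Mul S] [Star S] (T : Set S) : Prop :=
  (∀ x ∈ T, ∀ y ∈ T, x * y ∈ T) ∧ ∀ x ∈ T, star x ∈ T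

/-- `T` is an HS-stable involution subsemigroup. -/
def IsHSStable {S : Type*} [Mul S] [Star S] (T : Set S) : Prop :=
  IsInvSub T ∧ hermSq S ⊆ T ∧
    ∀ h ∈ hermSq S, ∀ x y : S, x * h * y ∈ T → x * y ∈ T

/-- The HS-stable involution subsemigroup generated by `B`. -/
def genHS {S : Type*} [Mul S] [Star S] (B : Set S) : Set S :=
  ⋂₀ {T | IsHSStable T ∧ B ⊆ T}

/-- The involution subsemigroup generated by `B`. -/
def genInv {S : Type*} [Mul S] [Star S] (B : Set S) : Set S :=
  ⋂₀ {T | IsInvSub T ∧ B ⊆ T}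

/-- The closure `Tω`. -/
def omegaCl {S : Type*} [Mul S] (T : Set S) : Set S := {s | ∃ t ∈ T, s * t ∈ T}

/-- `S² = {x y : x, y ∈ S}`. -/
def sqSet (S : Type*) [Mul S] : Set S := {a | ∃ x y : S, a = x * y}

/-- Iterated complex product `A 0 * A 1 * ⋯ * A n`. -/
def pprod {S : Type*} [Mul S] (A : ℕ → Set S) : ℕ → Set S
  | 0 => A 0
  | (k+1) => pprod A k * A (k+1)


theorem stmt0 {G : Type*} [Group G] (S : Set G) (hS : S.Nonempty) :
    Subgroup.closure (S⁻¹ * S) = Subgroup.closure S ↔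
      ¬ ∃ (g : G) (G' : Subgroup G), G' < Subgroup.closure S ∧
          S ⊆ (fun h => g * h) '' (G' : Set G) := by
  obtain ⟨s₀, hs₀⟩ := hS
  have hle : Subgroup.closure (S⁻¹ * S) ≤ Subgroup.closure S := by
    rw [Subgroup.closure_le]
    rintro a ⟨x, hx, y, hy, rfl⟩
    rw [Set.mem_inv] at hx
    have hx' : x ∈ Subgroup.closure S := by
      simpa using inv_mem (Subgroup.subset_closure hx)
    exact mul_mem hx' (Subgroup.subset_closure hy)
  constructor
  · rintro heq ⟨g, G', hlt, hsub⟩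
    have hsub' : S⁻¹ * S ⊆ (G' : Set G) := by
      rintro a ⟨x, hx, y, hy, rfl⟩
      rw [Set.mem_inv] at hx
      obtain ⟨b, hb, hb'⟩ := hsub hx
      obtain ⟨c, hc, hc'⟩ := hsub hy
      have h1 : g * b = x⁻¹ := hb'
      have h2 : g * c = y := hc'
      have hxy : x * y = b⁻¹ * c := by
        rw [← h2, ← inv_inv x, ← h1]; group
      show x * y ∈ (G' : Set G)
      rw [hxy]
      exact mul_mem (inv_mem hb) hc
    have h1 : Subgroup.closure S ≤ G' := heq ▸ Subgroup.closure_le _ |>.2 hsub'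
    exact absurd h1 (not_le_of_gt hlt)
  · intro h
    refine le_antisymm hle ?_
    by_contra hnot
    refine h ⟨s₀, Subgroup.closure (S⁻¹ * S), lt_of_le_of_ne hle ?_, ?_⟩
    · intro heq'; exact hnot (le_of_eq heq'.symm)
    · intro s hs
      refine ⟨s₀⁻¹ * s, Subgroup.subset_closure ⟨s₀⁻¹, by simpa using hs₀, s, hs, rfl⟩, ?_⟩
      simp
end

section
/- Let S be an involution semigroup, S₁, ..., Sₙ nonempty subsets of S, and 1 ≤ k ≤ n. Then the complex product S₁⋯S_k S_k*⋯S₁* is contained in the HS-stable involution subsemigroup generated by the complex product S₁⋯Sₙ. -/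
open Pointwise

lemma tail_ext {S : Type*} [Semigroup S] (A : ℕ → Set S) (k : ℕ) :
    ∀ m, k < m → (∀ i ≤ m, (A i).Nonempty) →
      ∃ a, ∀ p ∈ pprod A k, p * a ∈ pprod A m := by
  intro m
  induction m with
  | zero => omega
  | succ m ih =>
    intro hk hne
    obtain ⟨b, hb⟩ := hne (m+1) le_rfl
    rcases Nat.lt_or_ge k m with h | h
    · obtain ⟨a, ha⟩ := ih h (fun i hi => hne i (Nat.le_succ_of_le hi))
      exact ⟨a * b, fun p hp => by
        rw [← mul_assoc]
        exact Set.mul_mem_mul (ha p hp) hb⟩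
    · have : k = m := by omega
      subst this
      exact ⟨b, fun p hp => Set.mul_mem_mul hp hb⟩

theorem stmt2 {S : Type*} [Semigroup S] [StarMul S] (A : ℕ → Set S) (n k : ℕ)
    (hk : k ≤ n) (hne : ∀ i ≤ n, (A i).Nonempty) :
    pprod A k * ((star ·) '' pprod A k) ⊆ genHS (pprod A n) :=  by
  rintro z ⟨p, hp, -, ⟨q, hq, rfl⟩, rfl⟩
  intro T hT
  obtain ⟨⟨⟨hmul, hstar⟩, hherm, hstab⟩, hsub⟩ := hT
  rcases Nat.lt_or_ge k n with h | h
  · obtain ⟨a, ha⟩ := tail_ext A k n h hne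
    have h1 : p * a ∈ T := hsub (ha p hp)
    have h2 : star (q * a) ∈ T := hstar _ (hsub (ha q hq))
    have h3 : p * (a * star a) * star q ∈ T := by
      have := hmul _ h1 _ h2
      rw [star_mul] at this
      rw [mul_assoc, mul_assoc]
      rw [mul_assoc] at this
      exact this
    exact hstab _ ⟨a, rfl⟩ p (star q) h3
  · have : k = n := by omega
    subst this
    exact hmul _ (hsub hp) _ (hstar _ (hsub hq))
end

section
/- Let S be an involution semigroup, S₁, ..., Sₙ nonempty subsets of S, and S' an involution subsemigroup. Then the HS-stable involution subsemigroup generated by S₁⋯Sₙ is a proper subset of S' if and only if there exist an HS-stable involution subsemigroup T properly contained in S' and elements a₁, ..., a_{n-1} ∈ S with a_{i-1} S_i a_i* ⊆ T for all 1 < i < n, S₁ a₁* ⊆ T, and a_{n-1} Sₙ ⊆ T. -/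
open Pointwise

/- ### Auxiliary material -/

/-- Suffix products: `sufP x m k = x (m-k) * ⋯ * x m`. -/
def sufP {S : Type*} [Mul S] (x : ℕ → S) (m : ℕ) : ℕ → S
  | 0 => x m
  | (k+1) => x (m - (k+1)) * sufP x m k

/-- Prefix products: `preP x k = x 0 * ⋯ * x k`. -/
def preP {S : Type*} [Mul S] (x : ℕ → S) : ℕ → S
  | 0 => x 0
  | (k+1) => preP x k * x (k+1)

lemma genHS_isHSStable {S : Type*} [Mul S] [Star S] (B : Set S) :
    IsHSStable (genHS B) := by
  refine ⟨⟨?_, ?_⟩, ?_, ?_⟩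
  · intro u hu v hv
    exact Set.mem_sInter.mpr fun T hT =>
      hT.1.1.1 u (Set.mem_sInter.mp hu T hT) v (Set.mem_sInter.mp hv T hT)
  · intro u hu
    exact Set.mem_sInter.mpr fun T hT => hT.1.1.2 u (Set.mem_sInter.mp hu T hT)
  · intro h hh
    exact Set.mem_sInter.mpr fun T hT => hT.1.2.1 hh
  · intro h hh u v huv
    exact Set.mem_sInter.mpr fun T hT =>
      hT.1.2.2 h hh u v (Set.mem_sInter.mp huv T hT)

lemma subset_genHS {S : Type*} [Mul S] [Star S] (B : Set S) : B ⊆ genHS B :=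
  fun _ hb => Set.mem_sInter.mpr fun _ hT => hT.2 hb

lemma genHS_subset {S : Type*} [Mul S] [Star S] {B T : Set S}
    (hT : IsHSStable T) (hB : B ⊆ T) : genHS B ⊆ T :=
  Set.sInter_subset_of_mem ⟨hT, hB⟩

/-- Deletion of an inner factor `star u * u` in an HS-stable set. -/
lemma hs_del {S : Type*} [Semigroup S] [StarMul S] {T : Set S} (hT : IsHSStable T)
    (x u y : S) (h : x * (star u * u) * y ∈ T) : x * y ∈ T :=
  hT.2.2 _ ⟨star u, by rw [star_star]⟩ x y h

theorem stmt3 {S : Type*} [Semigroup S] [StarMul S] (A : ℕ → Set S) (m : ℕ) (hm : 1 ≤ m)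
    (hne : ∀ i ≤ m, (A i).Nonempty) (S' : Set S) (hS' : IsInvSub S') :
    genHS (pprod A m) ⊂ S' ↔
      ∃ T : Set S, IsHSStable T ∧ T ⊂ S' ∧ ∃ a : ℕ → S,
        (∀ s ∈ A 0, s * star (a 0) ∈ T) ∧
        (∀ i, 0 < i → i < m → ∀ s ∈ A i, a (i - 1) * s * star (a i) ∈ T) ∧
        (∀ s ∈ A m, a (m - 1) * s ∈ T) := by
  obtain ⟨n, rfl⟩ : ∃ n, m = n + 1 := ⟨m - 1, by omega⟩
  set m := n + 1 with hmdef
  constructor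
  · -- forward direction
    intro hsub
    -- choose elements of the `A i`
    have hxex : ∀ i, ∃ v : S, i ≤ m → v ∈ A i := by
      intro i
      by_cases h : i ≤ m
      · exact ⟨(hne i h).choose, fun _ => (hne i h).choose_spec⟩
      · exact ⟨(hne 0 (by omega)).choose, fun h' => absurd h' h⟩
    choose x hxA using hxex
    set q : ℕ → S := fun i => sufP x m (m - i) with hqdef
    have hqm : q m = x m := by
      simp only [hqdef, Nat.sub_self]
      rfl
    have hqstep : ∀ i, i < m → q i = x i * q (i + 1) := by
      intro i hi
      have h1 : m - i = (m - (i + 1)) + 1 := by omega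
      simp only [hqdef]
      rw [h1, sufP]
      congr 2
      omega
    have hp : ∀ k, k ≤ m → preP x k ∈ pprod A k := by
      intro k
      induction k with
      | zero => intro _; exact hxA 0 (by omega)
      | succ k ih =>
        intro hk
        exact Set.mul_mem_mul (ih (by omega)) (hxA (k + 1) hk)
    -- appending the suffix product lands back in `pprod A m`
    have L : ∀ d j, j + (d + 1) = m → ∀ w ∈ pprod A j, w * q (j + 1) ∈ pprod A m := by
      intro d
      induction d with
      | zero =>
        intro j hj w hw
        have hq1 : q (j + 1) = x m := by rw [show j + 1 = m by omega]; exact hqm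
        have hpp : pprod A m = pprod A j * A m := by
          rw [show m = j + 1 by omega]
          rfl
        rw [hq1, hpp]
        exact Set.mul_mem_mul hw (hxA m le_rfl)
      | succ d ih =>
        intro j hj w hw
        rw [hqstep (j + 1) (by omega), ← mul_assoc]
        exact ih (j + 1) (by omega) _ (Set.mul_mem_mul hw (hxA (j + 1) (by omega)))
    set T : Set S := genHS (pprod A m) with hTdef
    have hT : IsHSStable T := genHS_isHSStable _
    have hBT : pprod A m ⊆ T := subset_genHS _
    refine ⟨T, hT, hsub, fun i => star (q (i + 1)), ?_, ?_, ?_⟩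
    · intro s hs
      rw [star_star]
      exact hBT (L n 0 (by omega) s hs)
    · intro i hi0 him s hs
      obtain ⟨i', rfl⟩ : ∃ i', i = i' + 1 := ⟨i - 1, by omega⟩
      show star (q (i' + 1)) * s * star (star (q (i' + 1 + 1))) ∈ T
      rw [star_star]
      have hw1 : (preP x i' * s) * q (i' + 1 + 1) ∈ T := by
        apply hBT
        apply L (m - i' - 2) (i' + 1) (by omega)
        exact Set.mul_mem_mul (hp i' (by omega)) hs
      have hw2 : preP x i' * q (i' + 1) ∈ T :=
        hBT (L (m - i' - 1) i' (by omega) _ (hp i' (by omega)))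
      have hu : star (preP x i' * q (i' + 1)) ∈ T := hT.1.2 _ hw2
      have hprod : star (preP x i' * q (i' + 1)) * ((preP x i' * s) * q (i' + 1 + 1)) ∈ T :=
        hT.1.1 _ hu _ hw1
      have key : star (preP x i' * q (i' + 1)) * ((preP x i' * s) * q (i' + 1 + 1)) =
          star (q (i' + 1)) * (star (preP x i') * preP x i') * (s * q (i' + 1 + 1)) := by
        rw [star_mul]
        simp only [mul_assoc]
      rw [key] at hprod
      have := hs_del hT (star (q (i' + 1))) (preP x i') (s * q (i' + 1 + 1)) hprod
      rwa [← mul_assoc] at this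
    · intro s hs
      beta_reduce
      have hqn : q (m - 1 + 1) = x m := by
        rw [show m - 1 + 1 = m by omega]; exact hqm
      rw [hqn]
      have hw1 : preP x n * s ∈ T := hBT (Set.mul_mem_mul (hp n (by omega)) hs)
      have hw2 : preP x n * x m ∈ T := hBT (Set.mul_mem_mul (hp n (by omega)) (hxA m le_rfl))
      have hu : star (preP x n * x m) ∈ T := hT.1.2 _ hw2
      have hprod : star (preP x n * x m) * (preP x n * s) ∈ T := hT.1.1 _ hu _ hw1
      have key : star (preP x n * x m) * (preP x n * s) =
          star (x m) * (star (preP x n) * preP x n) * s := by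
        rw [star_mul]
        simp only [mul_assoc]
      rw [key] at hprod
      exact hs_del hT (star (x m)) (preP x n) s hprod
  · -- reverse direction
    rintro ⟨T, hT, hTS, a, h0, hmid, hlast⟩
    have claim : ∀ k, k ≤ n → ∀ w ∈ pprod A k, w * star (a k) ∈ T := by
      intro k
      induction k with
      | zero => intro _ w hw; exact h0 w hw
      | succ k ih =>
        intro hk w hw
        rw [show pprod A (k + 1) = pprod A k * A (k + 1) from rfl, Set.mem_mul] at hw
        obtain ⟨v, hv, s, hs, rfl⟩ := hw
        have h1 := ih (by omega) v hv
        have h2 := hmid (k + 1) (by omega) (by omega) s hs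
        rw [show k + 1 - 1 = k from rfl] at h2
        have h3 := hT.1.1 _ h1 _ h2
        have key : (v * star (a k)) * (a k * s * star (a (k + 1))) =
            v * (star (a k) * a k) * (s * star (a (k + 1))) := by
          simp only [mul_assoc]
        rw [key] at h3
        have := hs_del hT v (a k) (s * star (a (k + 1))) h3
        rwa [← mul_assoc] at this
    have hsubT : pprod A m ⊆ T := by
      intro w hw
      rw [show pprod A m = pprod A n * A m from rfl, Set.mem_mul] at hw
      obtain ⟨v, hv, s, hs, rfl⟩ := hw
      have h1 := claim n le_rfl v hv
      have h2 := hlast s hs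
      rw [show m - 1 = n from rfl] at h2
      have h3 := hT.1.1 _ h1 _ h2
      have key : (v * star (a n)) * (a n * s) = v * (star (a n) * a n) * s := by
        simp only [mul_assoc]
      rw [key] at h3
      exact hs_del hT v (a n) s h3
    exact ssubset_of_subset_of_ssubset (genHS_subset hT hsubT) hTS
end

section
/- Let S be an involution semigroup and T an HS-stable involution subsemigroup. Then every idempotent of S lies in T, and for every x ∈ S, x H_S² x* ⊆ T. -/
open Pointwise

theorem stmt8 {S : Type*} [Semigroup S] [StarMul S] (T : Set S) (hT : IsHSStable T) :
    (∀ e : S, e * e = e → e ∈ T) ∧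
      ∀ x : S, ∀ h ∈ hermSq S, ∀ h' ∈ hermSq S, x * (h * h') * star x ∈ T := by

  obtain ⟨⟨hmul, hstar⟩, hherm, hstab⟩ := hT
  constructor
  · intro e he
    -- e e* ∈ T, e* e ∈ T
    have h1 : e * star e ∈ T := hherm ⟨e, rfl⟩
    have h2 : star e * e ∈ T := hherm ⟨star e, by rw [star_star]⟩
    -- (e e*)(e* e) ∈ T
    have h3 : (e * star e) * (star e * e) ∈ T := hmul _ h1 _ h2
    -- e * (e e*) * (e* e) = (e e*)(e* e)
    have key : e * (e * star e) * (star e * e) = (e * star e) * (star e * e) := by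
      rw [← mul_assoc, ← mul_assoc, he, mul_assoc]
    have h4 : e * (star e * e) ∈ T := by
      refine hstab (e * star e) ⟨e, rfl⟩ e (star e * e) ?_
      rw [key]; exact h3
    -- now remove e* e
    have key2 : e * (star e * e) * e = e * (star e * e) := by
      rw [mul_assoc, mul_assoc, he]
    have h5 : e ∈ T := by
      have := hstab (star e * e) ⟨star e, by rw [star_star]⟩ e e (by rw [key2]; exact h4)
      rwa [he] at this
    exact h5
  · rintro x h ⟨g, rfl⟩ h' ⟨k, rfl⟩
    have h1 : x * (g * star g) * star x ∈ T := by
      have : (x * g) * star (x * g) ∈ T := hherm ⟨x * g, rfl⟩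
      simpa [star_mul, mul_assoc] using this
    have h2 : x * (k * star k) * star x ∈ T := by
      have : (x * k) * star (x * k) ∈ T := hherm ⟨x * k, rfl⟩
      simpa [star_mul, mul_assoc] using this
    have h3 : (x * (g * star g) * star x) * (x * (k * star k) * star x) ∈ T :=
      hmul _ h1 _ h2
    have key : (x * (g * star g)) * (star x * x) * ((k * star k) * star x)
        = (x * (g * star g) * star x) * (x * (k * star k) * star x) := by
      simp [mul_assoc]
    have h4 := hstab (star x * x) ⟨star x, by rw [star_star]⟩
      (x * (g * star g)) ((k * star k) * star x) (by rw [key]; exact h3)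
    simpa [mul_assoc] using h4
end

section
/- Let S be an involution semigroup generated, as a semigroup, by its set of idempotents. Then S has no proper HS-stable involution subsemigroup (i.e., S is HS-simple). -/
open Pointwise

theorem stmt9 {S : Type*} [Semigroup S] [StarMul S]
    (hgen : ∀ s : S, s ∈ Subsemigroup.closure {e : S | e * e = e}) :
    ∀ T : Set S, IsHSStable T → T = Set.univ := by
  rintro T ⟨⟨hmul, hstar⟩, hherm, hstab⟩
  ext s
  simp only [Set.mem_univ, iff_true]
  induction hgen s using Subsemigroup.closure_induction with
  | mul x y _ _ hx hy => exact hmul x hx y hy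
  | mem e he => ?_
  -- e is idempotent; show e ∈ T
  have hse : star e * star e = star e := by
    rw [← star_mul, he]
  have h1 : e * star e ∈ T := hherm ⟨e, rfl⟩
  have h2 : star e * e ∈ T := hherm ⟨star e, by rw [star_star]⟩
  have h3 : (e * star e) * (star e * e) ∈ T := hmul _ h1 _ h2
  have key : e * (star e * e) * e ∈ T := by
    have : (e * star e) * (star e * e) = e * (star e * e) * e := by
      rw [mul_assoc e (star e) (star e * e), ← mul_assoc (star e) (star e) e, hse,
        mul_assoc e (star e * e) e, mul_assoc (star e) e e, he]
    rwa [this] at h3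
  have := hstab (star e * e) ⟨star e, by rw [star_star]⟩ e e key
  rwa [he] at this
end

section
/- Let S be an involution semigroup and T ⊆ S such that (1) x H_S² x* ⊆ T for each x ∈ S, (2) Tω ∩ S² = T ∩ S², and (3) T \ S² = T* \ S². Then T is an involution subsemigroup of S containing H_S. -/
open Pointwise

theorem stmt10 {S : Type*} [Semigroup S] [StarMul S] (T : Set S)
    (h1 : ∀ x : S, ∀ h ∈ hermSq S, ∀ h' ∈ hermSq S, x * (h * h') * star x ∈ T)
    (h2 : omegaCl T ∩ sqSet S = T ∩ sqSet S)
    (h3 : T \ sqSet S = ((star ·) '' T) \ sqSet S) :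
    IsInvSub T ∧ hermSq S ⊆ T := by
  -- key: to show s ∈ T it suffices that s ∈ S² and s·t ∈ T for some t ∈ T
  have key : ∀ s : S, (∃ t ∈ T, s * t ∈ T) → s ∈ sqSet S → s ∈ T := by
    intro s hω hs
    have : s ∈ omegaCl T ∩ sqSet S := ⟨hω, hs⟩
    rw [h2] at this
    exact this.1
  have hH : ∀ x : S, x * star x ∈ hermSq S := fun x => ⟨x, rfl⟩
  have hHstar : ∀ x : S, star x * x ∈ hermSq S := fun x => ⟨star x, by simp⟩
  -- Lemma A : x h x* ∈ T for every hermitian square h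
  have lemA : ∀ (x h : S), h ∈ hermSq S → x * h * star x ∈ T := by
    intro x h hh
    apply key
    · refine ⟨x * (star x * x * (star x * x)) * star x,
        h1 x _ (hHstar x) _ (hHstar x), ?_⟩
      have hm3 : (star x * x) * ((star x * x) * (star x * x)) ∈ hermSq S :=
        ⟨star x * x * star x, by simp [mul_assoc]⟩
      have hT := h1 x h hh _ hm3
      have e : x * h * star x * (x * (star x * x * (star x * x)) * star x)
          = x * (h * ((star x * x) * ((star x * x) * (star x * x)))) * star x := by
        simp [mul_assoc]
      rw [e]
      exact hT
    · exact ⟨x * h, star x, rfl⟩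
  -- hermSq ⊆ T
  have hHT : hermSq S ⊆ T := by
    rintro a ⟨x, rfl⟩
    apply key
    · refine ⟨x * (star x * x) * star x, lemA x _ (hHstar x), ?_⟩
      have hT := h1 x _ (hHstar x) _ (hHstar x)
      have e : x * star x * (x * (star x * x) * star x)
          = x * (star x * x * (star x * x)) * star x := by simp [mul_assoc]
      rw [e]
      exact hT
    · exact ⟨x, star x, rfl⟩
  -- star closure
  have hstar : ∀ t ∈ T, star t ∈ T := by
    intro t ht
    by_cases hsq : t ∈ sqSet S
    · obtain ⟨x, y, rfl⟩ := hsq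
      have h5 : star (x * y) * (x * y) * star (x * y) ∈ T := by
        apply key
        · refine ⟨x * y, ht, ?_⟩
          have e : star (x * y) * (x * y) * star (x * y) * (x * y)
              = (star (x * y) * (x * y)) * star (star (x * y) * (x * y)) := by
            simp [mul_assoc]
          rw [e]
          exact hHT (hH _)
        · exact ⟨star (x * y) * (x * y), star (x * y), rfl⟩
      apply key
      · refine ⟨(x * y) * star (x * y), hHT (hH (x * y)), ?_⟩
        rw [← mul_assoc]
        exact h5
      · exact ⟨star y, star x, by simp⟩
    · have hmem : t ∈ ((star ·) '' T) \ sqSet S := by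
        rw [← h3]; exact ⟨ht, hsq⟩
      obtain ⟨⟨u, hu, hut⟩, -⟩ := hmem
      rw [← hut]
      simpa using hu
  -- a ∈ T, h hermitian ⇒ a·h ∈ T
  have hmulH : ∀ a ∈ T, ∀ h ∈ hermSq S, a * h ∈ T := by
    intro a ha h hh
    apply key
    · exact ⟨star a, hstar a ha, lemA a h hh⟩
    · obtain ⟨y, rfl⟩ := hh
      exact ⟨a * y, star y, by rw [mul_assoc]⟩
  -- multiplicative closure
  have hmul : ∀ a ∈ T, ∀ b ∈ T, a * b ∈ T := by
    intro a ha b hb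
    apply key
    · refine ⟨star b, hstar b hb, ?_⟩
      rw [mul_assoc]
      exact hmulH a ha _ (hH b)
    · exact ⟨a, b, rfl⟩
  exact ⟨⟨hmul, hstar⟩, hHT⟩
end

section
/- Let S be an involution semigroup and T an involution subsemigroup such that x H_S² x* ⊆ T for every x ∈ S. Then Tω is a closed involution subsemigroup of S containing H_S; in particular (Tω)ω = Tω and (Tω)* = Tω. -/
open Pointwise

theorem stmt11 {S : Type*} [Semigroup S] [StarMul S] (T : Set S) (hT : IsInvSub T)
    (h1 : ∀ x : S, ∀ h ∈ hermSq S, ∀ h' ∈ hermSq S, x * (h * h') * star x ∈ T) :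
    IsInvSub (omegaCl T) ∧ hermSq S ⊆ omegaCl T ∧
      omegaCl (omegaCl T) = omegaCl T ∧ (star ·) '' omegaCl T = omegaCl T := by
  obtain ⟨hm, hs⟩ := hT
  -- star closure of `omegaCl T`
  have key : ∀ s ∈ omegaCl T, star s ∈ omegaCl T := by
    rintro s ⟨t, ht, hst⟩
    have hh2 : s * t * star t * star (s * t * star t) ∈ T := by
      have e : s * t * star t * star (s * t * star t)
          = s * t * (star t * t * star (s * t)) := by
        simp only [star_mul, star_star, mul_assoc]
      rw [e]
      exact hm _ hst _ (hm _ (hm _ (hs t ht) _ ht) _ (hs _ hst))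
    refine ⟨s * t * star t * star (s * t * star t) *
        (s * t * star t * star (s * t * star t)) * (s * t),
      hm _ (hm _ hh2 _ hh2) _ hst, ?_⟩
    have e : star s * (s * t * star t * star (s * t * star t) *
        (s * t * star t * star (s * t * star t)) * (s * t))
        = star s * (s * t * star t * star (s * t * star t) *
          (s * t * star t * star (s * t * star t))) * star (star s) * t := by
      simp only [star_mul, star_star, mul_assoc]
    rw [e]
    exact hm _ (h1 (star s) _ ⟨s * t * star t, rfl⟩ _ ⟨s * t * star t, rfl⟩) _ ht
  refine ⟨⟨?_, key⟩, ?_, ?_, ?_⟩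
  · -- multiplicative closure
    rintro x ⟨t, ht, hxt⟩ y ⟨t', ht', hyt'⟩
    obtain ⟨m, hmT, hxm⟩ := key x ⟨t, ht, hxt⟩
    refine ⟨t' * star (y * t') * (x * t * star (x * t)) * (star x * m),
      hm _ (hm _ (hm _ ht' _ (hs _ hyt')) _ (hm _ hxt _ (hs _ hxt))) _ hxm, ?_⟩
    have e : x * y * (t' * star (y * t') * (x * t * star (x * t)) * (star x * m))
        = x * (y * t' * star (y * t') * (x * t * star (x * t))) * star x * m := by
      simp only [star_mul, star_star, mul_assoc]
    rw [e]
    exact hm _ (h1 x _ ⟨y * t', rfl⟩ _ ⟨x * t, rfl⟩) _ hmT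
  · -- hermSq ⊆ omegaCl T
    rintro a ⟨x, rfl⟩
    refine ⟨x * (star x * x * (star x * x)) * star x,
      h1 x _ ⟨star x, by rw [star_star]⟩ _ ⟨star x, by rw [star_star]⟩, ?_⟩
    have e : x * star x * (x * (star x * x * (star x * x)) * star x)
        = x * (star x * x * (star x * x * (star x * x))) * star x := by
      simp only [mul_assoc]
    rw [e]
    exact h1 x _ ⟨star x, by rw [star_star]⟩ _
      ⟨star x * x, by rw [star_mul, star_star]⟩
  · -- idempotence of omegaCl
    apply Set.Subset.antisymm
    · rintro s ⟨u, ⟨v, hv, huv⟩, w, hw, hsuw⟩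
      obtain ⟨m, hmT, ham⟩ := key (s * u) ⟨w, hw, hsuw⟩
      refine ⟨u * v * (star v * (s * u * w * star (s * u * w)) * (star (s * u) * m)),
        hm _ huv _ (hm _ (hm _ (hs v hv) _ (hm _ hsuw _ (hs _ hsuw))) _ ham), ?_⟩
      have e : s * (u * v * (star v * (s * u * w * star (s * u * w)) *
            (star (s * u) * m)))
          = s * u * (v * star v * (s * u * w * star (s * u * w))) * star (s * u) * m := by
        simp only [star_mul, star_star, mul_assoc]
      rw [e]
      exact hm _ (h1 (s * u) _ ⟨v, rfl⟩ _ ⟨s * u * w, rfl⟩) _ hmT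
    · rintro s ⟨t, ht, hst⟩
      exact ⟨t, ⟨t, ht, hm t ht t ht⟩, ⟨t, ht, hm _ hst t ht⟩⟩
  · -- star image
    ext a
    constructor
    · rintro ⟨b, hb, rfl⟩
      exact key b hb
    · intro ha
      exact ⟨star a, key a ha, star_star a⟩
end

section
/- Let S be an involution semigroup and T an involution subsemigroup. Then T is HS-stable if and only if T ∩ S² is HS-stable. In particular, S² is an HS-stable involution subsemigroup of S. -/
open Pointwise

theorem stmt12 {S : Type*} [Semigroup S] [StarMul S] (T : Set S) (hT : IsInvSub T) :
    (IsHSStable T ↔ IsHSStable (T ∩ sqSet S)) ∧ IsHSStable (sqSet S) := by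
  have hsq : IsHSStable (sqSet S) := by
    refine ⟨⟨?_, ?_⟩, ?_, ?_⟩
    · rintro a _ b _; exact ⟨a, b, rfl⟩
    · rintro a ⟨x, y, rfl⟩; exact ⟨star y, star x, by rw [star_mul]⟩
    · rintro a ⟨x, rfl⟩; exact ⟨x, star x, rfl⟩
    · intro h _ x y _; exact ⟨x, y, rfl⟩
  refine ⟨⟨fun hTS => ?_, fun hTS => ?_⟩, hsq⟩
  · obtain ⟨hinv, hherm, hstab⟩ := hTS
    refine ⟨⟨?_, ?_⟩, ?_, ?_⟩
    · rintro a ⟨ha, _⟩ b ⟨hb, _⟩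
      exact ⟨hinv.1 a ha b hb, a, b, rfl⟩
    · rintro a ⟨ha, x, y, rfl⟩
      exact ⟨hinv.2 _ ha, star y, star x, by rw [star_mul]⟩
    · rintro a ha
      exact ⟨hherm ha, hsq.2.1 ha⟩
    · rintro h hh x y ⟨hm, _⟩
      exact ⟨hstab h hh x y hm, x, y, rfl⟩
  · obtain ⟨hinv, hherm, hstab⟩ := hTS
    refine ⟨hT, fun a ha => (hherm ha).1, ?_⟩
    rintro h ⟨z, rfl⟩ x y hm
    have hm' : x * (z * star z) * y ∈ T ∩ sqSet S :=
      ⟨hm, x * z, star z * y, by simp [mul_assoc]⟩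
    exact (hstab _ ⟨z, rfl⟩ x y hm').1
end

section
/- Let S be an involution semigroup and T ⊆ S. Then T is an HS-stable involution subsemigroup if and only if (1) x H_S² x* ⊆ T for each x ∈ S, (2) Tω ∩ S² = T ∩ S², and (3) T \ S² = T* \ S². -/
open Pointwise

theorem stmt13 {S : Type*} [Semigroup S] [StarMul S] (T : Set S) :
    IsHSStable T ↔
      ((∀ x : S, ∀ h ∈ hermSq S, ∀ h' ∈ hermSq S, x * (h * h') * star x ∈ T) ∧
        omegaCl T ∩ sqSet S = T ∩ sqSet S ∧
        T \ sqSet S = ((star ·) '' T) \ sqSet S) := by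
  constructor
  · rintro ⟨⟨hmul, hstar⟩, hH, hstab⟩
    refine ⟨?_, ?_, ?_⟩
    · rintro x _ ⟨a, rfl⟩ _ ⟨b, rfl⟩
      have hw : (x * (a * star a) * b) * star (x * (a * star a) * b) ∈ T := hH ⟨_, rfl⟩
      have key : (x * ((a * star a) * (b * star b))) * (a * star a) * star x ∈ T := by
        have : (x * ((a * star a) * (b * star b))) * (a * star a) * star x
            = (x * (a * star a) * b) * star (x * (a * star a) * b) := by
          simp only [star_mul, star_star, mul_assoc]
        rw [this]; exact hw
      exact hstab (a * star a) ⟨a, rfl⟩ _ _ key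
    · ext s
      constructor
      · rintro ⟨⟨t, ht, hst⟩, x, y, rfl⟩
        refine ⟨?_, x, y, rfl⟩
        have h1 : (x * y * t) * star t ∈ T := hmul _ hst _ (hstar _ ht)
        have h2 : ((x * y * t) * star t) * (star y * y) ∈ T :=
          hmul _ h1 _ (hH ⟨star y, by rw [star_star]⟩)
        have : x * ((y * t) * star (y * t)) * y ∈ T := by
          have : x * ((y * t) * star (y * t)) * y
              = ((x * y * t) * star t) * (star y * y) := by
            simp only [star_mul, star_star, mul_assoc]
          rw [this]; exact h2
        exact hstab _ ⟨y * t, rfl⟩ x y this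
      · rintro ⟨hT, hsq⟩
        exact ⟨⟨star s, hstar _ hT, hmul _ hT _ (hstar _ hT)⟩, hsq⟩
    · ext t
      constructor
      · rintro ⟨hT, hns⟩
        exact ⟨⟨star t, hstar _ hT, star_star t⟩, hns⟩
      · rintro ⟨⟨u, hu, rfl⟩, hns⟩
        exact ⟨hstar _ hu, hns⟩
  · rintro ⟨h1, h2, h3⟩
    have memω : ∀ s : S, s ∈ sqSet S → (∃ t ∈ T, s * t ∈ T) → s ∈ T := by
      intro s hs h
      have : s ∈ omegaCl T ∩ sqSet S := ⟨h, hs⟩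
      rw [h2] at this
      exact this.1
    -- hermitian squares are in T
    have hH : hermSq S ⊆ T := by
      rintro _ ⟨x, rfl⟩
      refine memω _ ⟨x, star x, rfl⟩ ⟨x * ((star x * x) * (star x * x)) * star x, ?_, ?_⟩
      · exact h1 x _ ⟨star x, by rw [star_star]⟩ _ ⟨star x, by rw [star_star]⟩
      · have : (x * star x) * (x * ((star x * x) * (star x * x)) * star x)
            = (x * star x) * ((x * star x) * (x * star x)) * star (x * star x) := by
          simp only [star_mul, star_star, mul_assoc]
        rw [this]
        exact h1 _ _ ⟨x, rfl⟩ _ ⟨x, rfl⟩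
    -- (star a * a)^2 ∈ T for all a
    have hsq2 : ∀ a : S, (star a * a) * (star a * a) ∈ T := by
      intro a
      refine memω _ ⟨star a * a, star a * a, rfl⟩
        ⟨star a * a, hH ⟨star a, by rw [star_star]⟩, ?_⟩
      have : ((star a * a) * (star a * a)) * (star a * a)
          = star a * ((a * star a) * (a * star a)) * star (star a) := by
        simp only [star_star, mul_assoc]
      rw [this]
      exact h1 _ _ ⟨a, rfl⟩ _ ⟨a, rfl⟩
    -- star a * a * star a ∈ T for a ∈ T
    have haaa : ∀ a ∈ T, star a * a * star a ∈ T := by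
      intro a ha
      refine memω _ ⟨star a * a, star a, rfl⟩ ⟨a, ha, ?_⟩
      have : (star a * a * star a) * a = (star a * a) * (star a * a) := by
        simp only [mul_assoc]
      rw [this]
      exact hsq2 a
    -- star closure
    have hstarCl : ∀ a ∈ T, star a ∈ T := by
      intro a ha
      by_cases hs : a ∈ sqSet S
      · obtain ⟨x, y, hxy⟩ := hs
        refine memω _ ⟨star y, star x, by rw [hxy, star_mul]⟩
          ⟨a * star a, hH ⟨a, rfl⟩, ?_⟩
        have : star a * (a * star a) = star a * a * star a := by
          simp only [mul_assoc]
        rw [this]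
        exact haaa a ha
      · have : a ∈ ((star ·) '' T) \ sqSet S := by rw [← h3]; exact ⟨ha, hs⟩
        obtain ⟨⟨u, hu, hua⟩, -⟩ := this
        have : star a = u := by rw [← hua, star_star]
        rw [this]; exact hu
    -- stability
    have hstab : ∀ h ∈ hermSq S, ∀ x y : S, x * h * y ∈ T → x * y ∈ T := by
      rintro _ ⟨w, rfl⟩ x y hxy
      refine memω _ ⟨x, y, rfl⟩ ⟨star (x * (w * star w) * y), hstarCl _ hxy, ?_⟩
      have : (x * y) * star (x * (w * star w) * y)
          = x * ((y * star y) * (w * star w)) * star x := by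
        simp only [star_mul, star_star, mul_assoc]
      rw [this]
      exact h1 _ _ ⟨y, rfl⟩ _ ⟨w, rfl⟩
    -- multiplying a member by a hermitian square stays in T
    have hmulH : ∀ u ∈ T, ∀ h ∈ hermSq S, u * h ∈ T := by
      rintro u hu _ ⟨w, rfl⟩
      have step : u * (w * star w) * (w * star w) ∈ T := by
        refine memω _ ⟨u * (w * star w), w * star w, by rw [mul_assoc]⟩
          ⟨star u, hstarCl _ hu, ?_⟩
        have : (u * (w * star w) * (w * star w)) * star u
            = u * ((w * star w) * (w * star w)) * star u := by
          simp only [mul_assoc]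
        rw [this]
        exact h1 _ _ ⟨w, rfl⟩ _ ⟨w, rfl⟩
      exact hstab _ ⟨w, rfl⟩ u (w * star w) step
    -- product closure
    have hmul : ∀ a ∈ T, ∀ b ∈ T, a * b ∈ T := by
      intro a ha b hb
      have key : a * (star a * a) * b ∈ T := by
        refine memω _ ⟨a * (star a * a), b, by rw [mul_assoc]⟩
          ⟨star b, hstarCl _ hb, ?_⟩
        have : (a * (star a * a) * b) * star b
            = (a * (star a * a)) * (b * star b) := by
          simp only [mul_assoc]
        rw [this]
        exact hmulH _ (hmulH _ ha _ ⟨star a, by rw [star_star]⟩) _ ⟨b, rfl⟩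
      exact hstab _ ⟨star a, by rw [star_star]⟩ a b key
    exact ⟨⟨hmul, hstarCl⟩, hH, hstab⟩
end

section
/- Let S be an involution semigroup and A ⊆ S. Then the HS-stable involution subsemigroup generated by A equals (⟨A ∪ ⋃_{x∈S} x H_S² x*⟩ω ∩ S²) ∪ ((A ∪ A*) \ S²), where ⟨·⟩ denotes the generated involution subsemigroup. -/
open Pointwise

theorem stmt14 {S : Type*} [Semigroup S] [StarMul S] (A : Set S) :
    genHS A =
      (omegaCl (genInv (A ∪ {a : S | ∃ x : S, ∃ h ∈ hermSq S, ∃ h' ∈ hermSq S,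
          a = x * (h * h') * star x})) ∩ sqSet S) ∪
        ((A ∪ (star ·) '' A) \ sqSet S) := by
  set Xs : Set S := {a : S | ∃ x : S, ∃ h ∈ hermSq S, ∃ h' ∈ hermSq S,
      a = x * (h * h') * star x} with hXdef
  set G : Set S := genInv (A ∪ Xs) with hGdef
  have hBG : A ∪ Xs ⊆ G := Set.subset_sInter fun T hT => hT.2
  have hGmul : ∀ a ∈ G, ∀ b ∈ G, a * b ∈ G := fun a ha b hb =>
    Set.mem_sInter.mpr fun T hT =>
      hT.1.1 a (Set.mem_sInter.mp ha T hT) b (Set.mem_sInter.mp hb T hT)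
  have hGstar : ∀ a ∈ G, star a ∈ G := fun a ha =>
    Set.mem_sInter.mpr fun T hT => hT.1.2 a (Set.mem_sInter.mp ha T hT)
  have hXmem : ∀ (x h h' : S), h ∈ hermSq S → h' ∈ hermSq S →
      x * (h * h') * star x ∈ G :=
    fun x h h' hh hh' => hBG (Or.inr ⟨x, h, hh, h', hh', rfl⟩)
  have hAG : ∀ a ∈ A, a ∈ G := fun a ha => hBG (Or.inl ha)
  have hHerm : ∀ a : S, a * star a ∈ hermSq S := fun a => ⟨a, rfl⟩
  have hHerm' : ∀ a : S, star a * a ∈ hermSq S := fun a => ⟨star a, by rw [star_star]⟩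
  have hGomega : ∀ g ∈ G, g ∈ omegaCl G := fun g hg => ⟨g, hg, hGmul g hg g hg⟩
  have hmemω : ∀ s, s ∈ (omegaCl G ∩ sqSet S) ∪ ((A ∪ (star ·) '' A) \ sqSet S) →
      s ∈ omegaCl G := by
    rintro s (⟨h1, -⟩ | ⟨h1, -⟩)
    · exact h1
    · rcases h1 with ha | ⟨a, ha, rfl⟩
      · exact hGomega s (hAG s ha)
      · exact hGomega _ (hGstar a (hAG a ha))
  apply Set.Subset.antisymm
  · apply Set.sInter_subset_of_mem
    refine ⟨⟨⟨?_, ?_⟩, ?_, ?_⟩, ?_⟩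
    · -- closed under multiplication
      intro s₁ hs₁ s₂ hs₂
      obtain ⟨t₁, ht₁, hst₁⟩ := hmemω s₁ hs₁
      obtain ⟨t₂, ht₂, hst₂⟩ := hmemω s₂ hs₂
      left
      refine ⟨⟨t₂ * star (s₂ * t₂) * t₁ * (star (s₁ * t₁) * (s₁ * t₁)), ?_, ?_⟩, s₁, s₂, rfl⟩
      · exact hGmul _ (hGmul _ (hGmul _ ht₂ _ (hGstar _ hst₂)) _ ht₁) _
          (hGmul _ (hGstar _ hst₁) _ hst₁)
      · have heq : s₁ * s₂ * (t₂ * star (s₂ * t₂) * t₁ * (star (s₁ * t₁) * (s₁ * t₁)))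
            = (s₁ * (((s₂ * t₂) * star (s₂ * t₂)) * (t₁ * star t₁)) * star s₁) * (s₁ * t₁) := by
          simp only [star_mul, star_star, mul_assoc]
        rw [heq]
        exact hGmul _ (hXmem s₁ _ _ (hHerm _) (hHerm _)) _ hst₁
    · -- closed under star
      rintro s hs
      rcases hs with ⟨⟨t, htG, hstG⟩, hx⟩ | ⟨h1, h2⟩
      · left
        constructor
        · refine ⟨s * ((t * star t) * (t * star t)) * star s * (s * t),
            hGmul _ (hXmem s _ _ (hHerm t) (hHerm t)) _ hstG, ?_⟩
          have heq : star s * (s * ((t * star t) * (t * star t)) * star s * (s * t))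
              = ((star s * s) * ((t * star t) * (t * star t)) * star (star s * s)) * t := by
            simp only [star_mul, star_star, mul_assoc]
          rw [heq]
          exact hGmul _ (hXmem (star s * s) _ _ (hHerm t) (hHerm t)) _ htG
        · obtain ⟨x, y, rfl⟩ := hx
          exact ⟨star y, star x, by rw [star_mul]⟩
      · right
        refine ⟨?_, ?_⟩
        · rcases h1 with ha | ⟨a, ha, rfl⟩
          · exact Or.inr ⟨s, ha, rfl⟩
          · refine Or.inl ?_
            show star (star a) ∈ A
            rw [star_star]; exact ha
        · rintro ⟨x, y, hxy⟩
          exact h2 ⟨star y, star x, by rw [← star_star s, hxy, star_mul]⟩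
    · -- contains hermSq
      rintro h ⟨a, rfl⟩
      left
      constructor
      · refine ⟨a * ((star a * a) * (star a * a)) * star a,
          hXmem a _ _ (hHerm' a) (hHerm' a), ?_⟩
        have heq : a * star a * (a * ((star a * a) * (star a * a)) * star a)
            = a * ((star a * a) * ((star a * a) * (star a * a))) * star a := by
          simp only [mul_assoc]
        rw [heq]
        exact hXmem a _ _ (hHerm' a) ⟨star a * a, by simp only [star_mul, star_star]⟩
      · exact ⟨a, star a, rfl⟩
    · -- HS-stability
      intro h hh x y hxy
      have hxy2 : x * h * y ∈ omegaCl G := by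
        rcases hxy with ⟨h1, -⟩ | ⟨-, h2⟩
        · exact h1
        · exact absurd ⟨x * h, y, rfl⟩ h2
      obtain ⟨t, htG, hct⟩ := hxy2
      obtain ⟨a, rfl⟩ := hh
      left
      refine ⟨⟨t * (star (x * (a * star a) * y * t) * (x * (a * star a) * y * t)), ?_, ?_⟩,
        x, y, rfl⟩
      · exact hGmul _ htG _ (hGmul _ (hGstar _ hct) _ hct)
      · have heq : x * y * (t * (star (x * (a * star a) * y * t) * (x * (a * star a) * y * t)))
            = (x * (((y * t) * star (y * t)) * (a * star a)) * star x)
              * (x * (a * star a) * y * t) := by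
          simp only [star_mul, star_star, mul_assoc]
        rw [heq]
        exact hGmul _ (hXmem x _ _ (hHerm (y * t)) (hHerm a)) _ hct
    · -- contains A
      intro a ha
      by_cases hs : a ∈ sqSet S
      · exact Or.inl ⟨hGomega a (hAG a ha), hs⟩
      · exact Or.inr ⟨Or.inl ha, hs⟩
  · apply Set.subset_sInter
    rintro T ⟨⟨⟨hTmul, hTstar⟩, hTherm, hTstab⟩, hAT⟩
    have hXT : Xs ⊆ T := by
      rintro _ ⟨x, h, ⟨a, rfl⟩, h', ⟨b, rfl⟩, rfl⟩
      have h3 : ((x * a) * star (x * a)) * ((x * b) * star (x * b)) ∈ T :=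
        hTmul _ (hTherm (hHerm (x * a))) _ (hTherm (hHerm (x * b)))
      have h4 : ((x * a) * star (x * a)) * ((x * b) * star (x * b))
          = (x * (a * star a)) * (star x * x) * ((b * star b) * star x) := by
        simp only [star_mul, star_star, mul_assoc]
      rw [h4] at h3
      have h5 := hTstab (star x * x) (hHerm' x) _ _ h3
      have h6 : (x * (a * star a)) * ((b * star b) * star x)
          = x * ((a * star a) * (b * star b)) * star x := by
        simp only [mul_assoc]
      rwa [h6] at h5
    have hGsubT : G ⊆ T :=
      Set.sInter_subset_of_mem ⟨⟨hTmul, hTstar⟩, Set.union_subset hAT hXT⟩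
    rintro s hs
    rcases hs with ⟨⟨t, htG, hstG⟩, x, y, rfl⟩ | ⟨h1, -⟩
    · have hT3 : (((x * y) * t) * star t) * (star y * y) ∈ T :=
        hTmul _ (hTmul _ (hGsubT hstG) _ (hTstar _ (hGsubT htG))) _ (hTherm (hHerm' y))
      have hT4 : (((x * y) * t) * star t) * (star y * y)
          = x * ((y * t) * star (y * t)) * y := by
        simp only [star_mul, star_star, mul_assoc]
      rw [hT4] at hT3
      exact hTstab _ (hHerm (y * t)) x y hT3
    · rcases h1 with ha | ⟨a, ha, rfl⟩
      · exact hAT ha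
      · exact hTstar a (hAT ha)
end

section
/- Let S be an involution semigroup with S = S² and T ⊆ S. Then T is an HS-stable involution subsemigroup if and only if T is closed (T = Tω) and x H_S² x* ⊆ T for each x ∈ S. -/
open Pointwise

theorem stmt15 {S : Type*} [Semigroup S] [StarMul S] (hS2 : sqSet S = Set.univ)
    (T : Set S) :
    IsHSStable T ↔
      (T = omegaCl T ∧
        ∀ x : S, ∀ h ∈ hermSq S, ∀ h' ∈ hermSq S, x * (h * h') * star x ∈ T) := by
  constructor
  · rintro ⟨⟨hmul, hstar⟩, hH, hstab⟩
    constructor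
    · ext s
      constructor
      · intro hs
        exact ⟨star s, hstar s hs, hH ⟨s, rfl⟩⟩
      · rintro ⟨t, ht, hst⟩
        obtain ⟨u, v, rfl⟩ : s ∈ sqSet S := by rw [hS2]; trivial
        have hE : (u * v * t * star t) * (star v * v) ∈ T :=
          hmul _ (hmul _ hst _ (hstar t ht)) _ (hH ⟨star v, by simp⟩)
        have hE' : u * ((v * t) * star (v * t)) * v ∈ T := by
          have : u * ((v * t) * star (v * t)) * v = (u * v * t * star t) * (star v * v) := by
            simp only [star_mul, star_star, mul_assoc]
          rwa [this]
        exact hstab _ ⟨v * t, rfl⟩ u v hE'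
    · rintro x h ⟨y, rfl⟩ h' ⟨z, rfl⟩
      have hw : (x * (y * star y) * (z * star z)) * (y * star y) * star x ∈ T := by
        have key : (x * (y * star y) * z) * star (x * (y * star y) * z) ∈ T :=
          hH ⟨_, rfl⟩
        have : (x * (y * star y) * z) * star (x * (y * star y) * z) =
            (x * (y * star y) * (z * star z)) * (y * star y) * star x := by
          simp only [star_mul, star_star, mul_assoc]
        rwa [this] at key
      have := hstab _ ⟨y, rfl⟩ _ _ hw
      have heq : x * (y * star y) * (z * star z) * star x =
          x * (y * star y * (z * star z)) * star x := by
        simp only [mul_assoc]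
      rwa [heq] at this
  · rintro ⟨hω, hmain⟩
    have hH : hermSq S ⊆ T := by
      rintro a ⟨x, rfl⟩
      have hx : x * star x ∈ hermSq S := ⟨x, rfl⟩
      have hxx : star x * x ∈ hermSq S := ⟨star x, by simp⟩
      have ht : x * (star x * x * (star x * x)) * star x ∈ T := hmain x _ hxx _ hxx
      have h4 : (x * star x) * (x * (star x * x * (star x * x)) * star x) ∈ T := by
        have := hmain (x * star x) _ hx _ hx
        have heq : (x * star x) * ((x * star x) * (x * star x)) * star (x * star x) =
            (x * star x) * (x * (star x * x * (star x * x)) * star x) := by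
          simp only [star_mul, star_star, mul_assoc]
        rwa [heq] at this
      rw [hω]
      exact ⟨_, ht, h4⟩
    have hstar : ∀ t ∈ T, star t ∈ T := by
      intro t ht
      rw [hω]
      exact ⟨t, ht, hH ⟨star t, by simp⟩⟩
    have L1 : ∀ x : S, ∀ h ∈ hermSq S, x * h * star x ∈ T := by
      intro x h hh
      rw [hω]
      refine ⟨x * star x, hH ⟨x, rfl⟩, ?_⟩
      have := hmain x h hh _ (⟨star x, by simp⟩ : star x * x ∈ hermSq S)
      have heq : x * (h * (star x * x)) * star x = x * h * star x * (x * star x) := by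
        simp only [mul_assoc]
      rwa [heq] at this
    have L5 : ∀ u ∈ T, ∀ h ∈ hermSq S, u * h ∈ T := by
      intro u hu h hh
      rw [hω]
      refine ⟨star u, hstar u hu, ?_⟩
      exact L1 u h hh
    have hmul : ∀ a ∈ T, ∀ b ∈ T, a * b ∈ T := by
      intro a ha b hb
      rw [hω]
      refine ⟨star b, hstar b hb, ?_⟩
      have := L5 a ha _ (⟨b, rfl⟩ : b * star b ∈ hermSq S)
      rwa [← mul_assoc] at this
    refine ⟨⟨hmul, hstar⟩, hH, ?_⟩
    rintro h hh x y hxy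
    rw [hω]
    refine ⟨star y * h * star x, ?_, ?_⟩
    · obtain ⟨w, rfl⟩ := hh
      have := hstar _ hxy
      have heq : star (x * (w * star w) * y) = star y * (w * star w) * star x := by
        simp only [star_mul, star_star, mul_assoc]
      rwa [heq] at this
    · have := hmain x _ (⟨y, rfl⟩ : y * star y ∈ hermSq S) h hh
      have heq : x * (y * star y * h) * star x = x * y * (star y * h * star x) := by
        simp only [mul_assoc]
      rwa [heq] at this
end

section
/- Let S be an involution semigroup with a zero element 0. Then 0* = 0, and for any A ⊆ S the HS-stable involution subsemigroup generated by A equals S² ∪ ((A ∪ A*) \ S²). Consequently, S is HS-simple if and only if S = S². -/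
open Pointwise

theorem stmt16 {S : Type*} [Semigroup S] [StarMul S] (z : S)
    (hz : ∀ s : S, z * s = z ∧ s * z = z) :
    star z = z ∧
      (∀ A : Set S, genHS A = sqSet S ∪ ((A ∪ (star ·) '' A) \ sqSet S)) ∧
      ((∀ T : Set S, IsHSStable T → T = Set.univ) ↔ sqSet S = Set.univ) := by
  have hzz : z * star z = z := (hz (star z)).1
  have hstar : star z = z := by
    calc star z = star (z * star z) := by rw [hzz]
      _ = z * star z := by rw [star_mul, star_star]
      _ = z := hzz
  have hzherm : z ∈ hermSq S := ⟨z, hzz.symm⟩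
  have sq_sub : ∀ T : Set S, IsHSStable T → sqSet S ⊆ T := by
    rintro T hT a ⟨x, y, ha⟩
    have h1 : x * z * y = z := by rw [(hz x).2, (hz y).1]
    have h2 : x * z * y ∈ T := by rw [h1]; exact hT.2.1 hzherm
    have := hT.2.2 z hzherm x y h2
    rwa [ha]
  have sq_stable : IsHSStable (sqSet S) := by
    refine ⟨⟨fun x _ y _ => ⟨x, y, rfl⟩, ?_⟩, ?_, ?_⟩
    · rintro x ⟨a, b, hab⟩
      exact ⟨star b, star a, by rw [hab, star_mul]⟩
    · rintro a ⟨x, hx⟩; exact ⟨x, star x, hx⟩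
    · intro h _ x y _; exact ⟨x, y, rfl⟩
  refine ⟨hstar, ?_, ?_⟩
  · intro A
    set R := sqSet S ∪ ((A ∪ (star ·) '' A) \ sqSet S) with hR
    have hAR : A ⊆ R := by
      intro a ha
      by_cases h : a ∈ sqSet S
      · exact Or.inl h
      · exact Or.inr ⟨Or.inl ha, h⟩
    have hRstable : IsHSStable R := by
      refine ⟨⟨fun x _ y _ => Or.inl ⟨x, y, rfl⟩, ?_⟩, fun a ha => Or.inl (sq_stable.2.1 ha), ?_⟩
      · rintro x (⟨a, b, hab⟩ | ⟨hx, -⟩)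
        · exact Or.inl ⟨star b, star a, by rw [hab, star_mul]⟩
        · by_cases h : star x ∈ sqSet S
          · exact Or.inl h
          · refine Or.inr ⟨?_, h⟩
            rcases hx with hx | ⟨a, ha, rfl⟩
            · exact Or.inr ⟨x, hx, rfl⟩
            · exact Or.inl (by rwa [star_star])
      · intro h _ x y _; exact Or.inl ⟨x, y, rfl⟩
    apply Set.Subset.antisymm
    · exact Set.sInter_subset_of_mem ⟨hRstable, hAR⟩
    · intro x hx
      apply Set.mem_sInter.2
      rintro T ⟨hT, hAT⟩
      rcases hx with hx | ⟨hx, -⟩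
      · exact sq_sub T hT hx
      · rcases hx with hx | ⟨a, ha, rfl⟩
        · exact hAT hx
        · exact hT.1.2 a (hAT ha)
  · constructor
    · intro h
      exact h (sqSet S) sq_stable
    · intro h T hT
      apply Set.eq_univ_of_univ_subset
      rw [← h]
      exact sq_sub T hT
end

section
/- Let S be a regular *-semigroup. Then H_S = {e ∈ E_S : e* = e} ⊆ E_S, and H_S² = E_S. -/
open Pointwise

theorem stmt18 {S : Type*} [Semigroup S] [StarMul S]
    (hreg : ∀ x : S, x * star x * x = x) :
    hermSq S = {e : S | e * e = e ∧ star e = e} ∧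
      hermSq S ⊆ {e : S | e * e = e} ∧
      hermSq S * hermSq S = {e : S | e * e = e} := by

  have proj : ∀ a ∈ hermSq S, a * a = a ∧ star a = a := by
    rintro a ⟨x, rfl⟩
    constructor
    · calc x * star x * (x * star x) = (x * star x * x) * star x := by
            simp [mul_assoc]
      _ = x * star x := by rw [hreg]
    · simp [star_mul]
  have hsub : hermSq S ⊆ {e : S | e * e = e} := fun a ha => (proj a ha).1
  refine ⟨?_, hsub, ?_⟩
  · ext a
    constructor
    · exact fun h => proj a h
    · rintro ⟨h1, h2⟩
      exact ⟨a, by rw [h2, h1]⟩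
  · apply Set.Subset.antisymm
    · rintro a ⟨p, hp, q, hq, rfl⟩
      obtain ⟨hp2, hps⟩ := proj p hp
      obtain ⟨hq2, hqs⟩ := proj q hq
      have := hreg (p * q)
      rw [star_mul, hqs, hps] at this
      calc p * q * (p * q) = p * (q * q) * (p * p) * q := by
            rw [hq2, hp2]; simp [mul_assoc]
      _ = p * q * (q * p) * (p * q) := by simp [mul_assoc]
      _ = p * q := this
    · intro e (he : e * e = e)
      have hsq : star e * star e = star e := by
        rw [← star_mul, he]
      refine ⟨e * star e, ⟨e, rfl⟩, star e * e, ⟨star e, by simp⟩, ?_⟩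
      calc e * star e * (star e * e) = e * (star e * star e) * e := by
            simp [mul_assoc]
      _ = e * star e * e := by rw [hsq]
      _ = e := hreg e
end

section
/- Let Y be a (meet-)semilattice and A₁, ..., Aₙ nonempty subsets of Y. Then the subsemilattice generated by A₁ ∪ ⋯ ∪ Aₙ equals the subsemilattice generated by the complex product A₁A₂⋯Aₙ if and only if for all 1 ≤ i, j ≤ n and every α ∈ A_i there exists β ∈ A_j with α ≤ β. -/
open Pointwise

/-- Iterated complex product of subsets of a meet-semilattice. -/
def iprod {Y : Type*} [SemilatticeInf Y] (A : ℕ → Set Y) : ℕ → Set Y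
  | 0 => A 0
  | (k+1) => {c : Y | ∃ a ∈ iprod A k, ∃ b ∈ A (k+1), c = a ⊓ b}

/-- The subsemilattice generated by a subset of a meet-semilattice. -/
def genSL {Y : Type*} [SemilatticeInf Y] (B : Set Y) : Set Y :=
  ⋂₀ {T | (∀ a ∈ T, ∀ b ∈ T, a ⊓ b ∈ T) ∧ B ⊆ T}


section Aux
variable {Y : Type*} [SemilatticeInf Y]

lemma subset_genSL (B : Set Y) : B ⊆ genSL B :=
  fun x hx T hT => hT.2 hx

lemma genSL_closed (B : Set Y) : ∀ a ∈ genSL B, ∀ b ∈ genSL B, a ⊓ b ∈ genSL B :=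
  fun a ha b hb T hT => hT.1 a (ha T hT) b (hb T hT)

lemma genSL_subset {B T : Set Y} (hT : ∀ a ∈ T, ∀ b ∈ T, a ⊓ b ∈ T) (hBT : B ⊆ T) :
    genSL B ⊆ T := fun x hx => hx T ⟨hT, hBT⟩

lemma iprod_le (A : ℕ → Set Y) : ∀ k, ∀ c ∈ iprod A k, ∀ j ≤ k, ∃ a ∈ A j, c ≤ a := by
  intro k
  induction k with
  | zero =>
    intro c hc j hj
    interval_cases j
    exact ⟨c, hc, le_rfl⟩
  | succ k ih =>
    rintro c ⟨a, ha, b, hb, rfl⟩ j hj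
    rcases Nat.lt_succ_iff_lt_or_eq.mp (Nat.lt_succ_of_le hj) with h | rfl
    · obtain ⟨β, hβ, hle⟩ := ih a ha j (Nat.lt_succ_iff.mp h)
      exact ⟨β, hβ, le_trans inf_le_left hle⟩
    · exact ⟨b, hb, inf_le_right⟩

lemma exists_iprod_ge (A : ℕ → Set Y) (α : Y) :
    ∀ k, (∀ j ≤ k, ∃ β ∈ A j, α ≤ β) → ∃ c ∈ iprod A k, α ≤ c := by
  intro k
  induction k with
  | zero =>
    intro h
    exact h 0 le_rfl
  | succ k ih =>
    intro h
    obtain ⟨c, hc, hαc⟩ := ih (fun j hj => h j (Nat.le_succ_of_le hj))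
    obtain ⟨β, hβ, hαβ⟩ := h (k+1) le_rfl
    exact ⟨c ⊓ β, ⟨c, hc, β, hβ, rfl⟩, le_inf hαc hαβ⟩

lemma mem_iprod_of (A : ℕ → Set Y) (α : Y) :
    ∀ k, ∀ i ≤ k, α ∈ A i → (∀ j ≤ k, ∃ β ∈ A j, α ≤ β) → α ∈ iprod A k := by
  intro k
  induction k with
  | zero =>
    intro i hi hα _
    interval_cases i
    exact hα
  | succ k ih =>
    intro i hi hα h
    rcases Nat.lt_succ_iff_lt_or_eq.mp (Nat.lt_succ_of_le hi) with hlt | rfl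
    · have hmem := ih i (Nat.lt_succ_iff.mp hlt) hα (fun j hj => h j (Nat.le_succ_of_le hj))
      obtain ⟨β, hβ, hαβ⟩ := h (k+1) le_rfl
      exact ⟨α, hmem, β, hβ, (inf_eq_left.mpr hαβ).symm⟩
    · obtain ⟨c, hc, hαc⟩ := exists_iprod_ge A α k (fun j hj => h j (Nat.le_succ_of_le hj))
      exact ⟨c, hc, α, hα, (inf_eq_right.mpr hαc).symm⟩

lemma iprod_subset_genSL_union (A : ℕ → Set Y) (n : ℕ) :
    ∀ k ≤ n, iprod A k ⊆ genSL (⋃ i ∈ Set.Iic n, A i) := by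
  intro k
  induction k with
  | zero =>
    intro hk c hc
    exact subset_genSL _ (Set.mem_biUnion (Set.mem_Iic.mpr hk) hc)
  | succ k ih =>
    rintro hk c ⟨a, ha, b, hb, rfl⟩
    exact genSL_closed _ a (ih (Nat.le_of_succ_le hk) ha) b
      (subset_genSL _ (Set.mem_biUnion (Set.mem_Iic.mpr hk) hb))

end Aux

theorem stmt19 {Y : Type*} [SemilatticeInf Y] (A : ℕ → Set Y) (n : ℕ)
    (hne : ∀ i ≤ n, (A i).Nonempty) :
    genSL (⋃ i ∈ Set.Iic n, A i) = genSL (iprod A n) ↔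
      ∀ i ≤ n, ∀ j ≤ n, ∀ α ∈ A i, ∃ β ∈ A j, α ≤ β := by
  constructor
  · intro hEq i hi j hj α hα
    have hαmem : α ∈ genSL (iprod A n) := by
      rw [← hEq]
      exact subset_genSL _ (Set.mem_biUnion (Set.mem_Iic.mpr hi) hα)
    have : α ∈ {x : Y | ∃ β ∈ A j, x ≤ β} := by
      refine genSL_subset ?_ ?_ hαmem
      · rintro a ⟨β, hβ, hle⟩ b _
        exact ⟨β, hβ, le_trans inf_le_left hle⟩
      · intro c hc
        exact iprod_le A n c hc j hj
    exact this
  · intro hCond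
    apply le_antisymm
    · apply genSL_subset (genSL_closed _)
      intro α hα
      obtain ⟨i, hi, hαi⟩ := Set.mem_iUnion₂.mp hα
      exact subset_genSL _
        (mem_iprod_of A α n i (Set.mem_Iic.mp hi) hαi
          (fun j hj => hCond i (Set.mem_Iic.mp hi) j hj α hαi))
    · exact genSL_subset (genSL_closed _) (iprod_subset_genSL_union A n n le_rfl)
end
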